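/- Let A be a d×d real symmetric positive semidefinite matrix and B a d×d real symmetric positive definite matrix, and let X ∈ ℝ^{d×t} have rank t. Then tr(X^T A X (X^T B X)^{-1}) ≥ Σ_{i=1}^t λ_{d−t+i}(B^{-1}A), where λ_1 ≥ ... ≥ λ_d are the eigenvalues of B^{-1}A in decreasing order. -/

import Mathlib

open Matrix Polynomial

lemma charpoly_conj_aux {n : ℕ} (P N : Matrix (Fin n) (Fin n) ℝ) (hP : IsUnit P.det) :
    (P⁻¹ * N * P).charpoly = N.charpoly := by
  have hPinv : P⁻¹ * P = 1 := Matrix.nonsing_inv_mul P hP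
  set f : Matrix (Fin n) (Fin n) ℝ →+* Matrix (Fin n) (Fin n) ℝ[X] :=
    (C : ℝ →+* ℝ[X]).mapMatrix with hf
  have hchm : charmatrix (P⁻¹ * N * P) = f P⁻¹ * charmatrix N * f P := by
    rw [charmatrix, charmatrix]
    have h0 : (C : ℝ →+* ℝ[X]).mapMatrix (P⁻¹ * N * P)
        = f P⁻¹ * (C : ℝ →+* ℝ[X]).mapMatrix N * f P := by
      rw [hf, _root_.map_mul, _root_.map_mul]
    rw [h0, mul_sub, sub_mul]
    congr 1
    rw [← (scalar_commute (X : ℝ[X]) (fun r => Commute.all _ _) (f P⁻¹)).eq, mul_assoc,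
      ← _root_.map_mul, hPinv, _root_.map_one, mul_one]
  have hdet : (f P⁻¹).det * (f P).det = 1 := by
    rw [← Matrix.det_mul, ← _root_.map_mul, hPinv, _root_.map_one, Matrix.det_one]
  rw [Matrix.charpoly, Matrix.charpoly, hchm, Matrix.det_mul, Matrix.det_mul]
  calc (f P⁻¹).det * (charmatrix N).det * (f P).det
      = (charmatrix N).det * ((f P⁻¹).det * (f P).det) := by ring
    _ = (charmatrix N).det := by rw [hdet, mul_one]

set_option maxHeartbeats 1000000

lemma psd_diag_nonneg {n : ℕ} {Q : Matrix (Fin n) (Fin n) ℝ} (hQ : Q.PosSemidef) (i : Fin n) :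
    0 ≤ Q i i := by
  exact hQ.diag_nonneg

/-- Lower trace bound: for `A` PSD, `B` PD and `X` of full column rank `t`,
`tr(Xᵀ A X (Xᵀ B X)⁻¹) ≥ Σ_{i=1}^t λ_{d−t+i}(B⁻¹A)`, i.e. the sum of the `t`
smallest eigenvalues of `B⁻¹A` (listed in decreasing order by `lam`). -/
theorem trace_ratio_lower_bound {d t : ℕ} (A B : Matrix (Fin d) (Fin d) ℝ)
    (X : Matrix (Fin d) (Fin t) ℝ)
    (hA : A.PosSemidef) (hB : B.PosDef) (hX : X.rank = t)
    (lam : Fin d → ℝ) (hlam : Antitone lam)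
    (hchar : (B⁻¹ * A).charpoly
      = ∏ i : Fin d, (Polynomial.X - Polynomial.C (lam i))) :
    ∑ i ∈ Finset.univ.filter (fun i : Fin d => d - t ≤ (i : ℕ)), lam i
      ≤ (Xᵀ * A * X * (Xᵀ * B * X)⁻¹).trace := by
  classical
  rcases Nat.eq_zero_or_pos t with ht0 | ht
  · subst ht0
    have h1 : (Finset.univ.filter (fun i : Fin d => d - 0 ≤ (i : ℕ))) = ∅ := by
      ext i
      have := i.isLt
      simp only [Finset.mem_filter, Finset.mem_univ, true_and, Finset.notMem_empty, iff_false]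
      omega
    rw [h1, Finset.sum_empty]
    have h2 : (Xᵀ * A * X * (Xᵀ * B * X)⁻¹).trace = 0 := by
      simp [Matrix.trace]
    rw [h2]
  -- main case
  have htd : t ≤ d := by
    have h := X.rank_le_card_height
    rw [hX, Fintype.card_fin] at h; exact h
  have hinj : Function.Injective X.mulVec := by
    have h1 := X.mulVecLin.finrank_range_add_finrank_ker
    rw [Matrix.rank] at hX
    rw [hX] at h1
    have h2 : Module.finrank ℝ (Fin t → ℝ) = t := by simp
    rw [h2] at h1
    have hker : LinearMap.ker X.mulVecLin = ⊥ :=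
      Submodule.finrank_eq_zero.mp (by omega)
    have := LinearMap.ker_eq_bot.mp hker
    exact this
  have hXt : Xᴴ = Xᵀ := conjTranspose_eq_transpose_of_trivial X
  -- square root of B
  have hBps := hB.posSemidef
  set S := (open scoped MatrixOrder in CFC.sqrt B) with hSdef
  have hS : S.PosSemidef := by open scoped MatrixOrder in exact (CFC.sqrt_nonneg B).posSemidef
  have hSS : S * S = B := by open scoped MatrixOrder in exact CFC.sqrt_mul_sqrt_self B hBps.nonneg
  have hSdet : IsUnit S.det := by
    refine isUnit_iff_ne_zero.mpr fun h => ?_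
    have hd1 : S.det * S.det = B.det := by rw [← Matrix.det_mul, hSS]
    rw [h, mul_zero] at hd1
    exact hB.det_pos.ne' hd1.symm
  have hSH : S.IsHermitian := hS.1
  have hSiH : (S⁻¹).IsHermitian := hSH.inv
  have hSSi : S * S⁻¹ = 1 := Matrix.mul_nonsing_inv S hSdet
  have hSiS : S⁻¹ * S = 1 := Matrix.nonsing_inv_mul S hSdet
  set M := S⁻¹ * A * S⁻¹ with hMdef
  have hM : M.PosSemidef := by
    have h := hA.mul_mul_conjTranspose_same S⁻¹
    rwa [hSiH.eq] at h
  -- charpoly of M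
  have hBinv : B⁻¹ = S⁻¹ * S⁻¹ := by rw [← hSS, Matrix.mul_inv_rev]
  have key1 : B⁻¹ * A = S⁻¹ * M * S := by
    rw [hBinv, hMdef]
    simp only [Matrix.mul_assoc, hSiS, Matrix.mul_one]
  have hcharM : M.charpoly = ∏ i : Fin d, (Polynomial.X - Polynomial.C (lam i)) := by
    rw [← hchar, key1, charpoly_conj_aux S M hSdet]
  -- spectral theorem for M
  have hMh := hM.1
  set V : Matrix (Fin d) (Fin d) ℝ := (hMh.eigenvectorUnitary : Matrix (Fin d) (Fin d) ℝ) with hVdef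
  set μ : Fin d → ℝ := hMh.eigenvalues with hμdef
  have hVVs : V * star V = 1 := Matrix.mem_unitaryGroup_iff.mp hMh.eigenvectorUnitary.2
  have hVsV : star V * V = 1 := Matrix.mem_unitaryGroup_iff'.mp hMh.eigenvectorUnitary.2
  have hspec : M = V * diagonal μ * star V := hMh.spectral_theorem
  have hVdet : IsUnit (star V).det := by
    have h : (star V).det * V.det = 1 := by rw [← Matrix.det_mul, hVsV, Matrix.det_one]
    exact IsUnit.of_mul_eq_one _ h
  have hVinv : (star V)⁻¹ = V := Matrix.inv_eq_left_inv hVVs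
  have hcharD : M.charpoly = (diagonal μ).charpoly := by
    have hM2 : M = (star V)⁻¹ * diagonal μ * star V := by rw [hVinv, ← hspec]
    rw [hM2, charpoly_conj_aux (star V) (diagonal μ) hVdet]
  -- multiset of eigenvalues
  have hmult : (Finset.univ.val.map lam) = (Finset.univ.val.map μ) := by
    have h1 : ∏ i : Fin d, (Polynomial.X - Polynomial.C (lam i))
        = ∏ i : Fin d, (Polynomial.X - Polynomial.C (μ i)) := by
      rw [← hcharM, hcharD,
        Matrix.charpoly_of_upperTriangular _ (Matrix.blockTriangular_diagonal μ)]
      simp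
    have e1 : ((Finset.univ.val.map lam).map (fun a => Polynomial.X - Polynomial.C a)).prod
        = ((Finset.univ.val.map μ).map (fun a => Polynomial.X - Polynomial.C a)).prod := by
      simpa [Multiset.map_map, Finset.prod_eq_multiset_prod, Function.comp_def] using h1
    calc Finset.univ.val.map lam
        = ((Finset.univ.val.map lam).map (fun a => Polynomial.X - Polynomial.C a)).prod.roots :=
          (roots_multiset_prod_X_sub_C _).symm
      _ = ((Finset.univ.val.map μ).map (fun a => Polynomial.X - Polynomial.C a)).prod.roots := by
          rw [e1]
      _ = Finset.univ.val.map μ := roots_multiset_prod_X_sub_C _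
  -- Y and the projection P
  set Y := S * X with hYdef
  have hSY : S * Y = B * X := by rw [hYdef, ← Matrix.mul_assoc, hSS]
  have hYY : Yᴴ * Y = Xᴴ * B * X := by
    rw [hYdef, conjTranspose_mul, hSH.eq]
    calc Xᴴ * S * (S * X) = Xᴴ * (S * S * X) := by simp only [Matrix.mul_assoc]
      _ = Xᴴ * (B * X) := by rw [hSS]
      _ = Xᴴ * B * X := by rw [Matrix.mul_assoc]
  have hYMY : Yᴴ * M * Y = Xᴴ * A * X := by
    rw [hYdef, conjTranspose_mul, hSH.eq, hMdef]
    calc Xᴴ * S * (S⁻¹ * A * S⁻¹) * (S * X)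
        = Xᴴ * ((S * S⁻¹) * A * (S⁻¹ * S)) * X := by simp only [Matrix.mul_assoc]
      _ = Xᴴ * A * X := by rw [hSSi, hSiS, Matrix.one_mul, Matrix.mul_one, Matrix.mul_assoc]
  have hC : (Xᴴ * B * X).PosDef := by
    refine Matrix.PosDef.of_dotProduct_mulVec_pos (Matrix.isHermitian_conjTranspose_mul_mul X hB.1) fun x hx => ?_
    have hx' : X *ᵥ x ≠ 0 := fun h => hx (hinj (h.trans (Matrix.mulVec_zero X).symm))
    simpa only [star_mulVec, dotProduct_mulVec, vecMul_vecMul] using hB.dotProduct_mulVec_pos hx'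
  have hCdet : IsUnit (Xᴴ * B * X).det := hB.det_pos.ne'.isUnit |> fun _ =>
    hC.det_pos.ne'.isUnit
  set Cm := (Xᴴ * B * X)⁻¹ with hCmdef
  have hCmps : Cm.PosSemidef := hC.inv.posSemidef
  have hCmH : Cmᴴ = Cm := hC.inv.1
  set P := Y * Cm * Yᴴ with hPdef
  have hPps : P.PosSemidef := hCmps.mul_mul_conjTranspose_same Y
  have hCC : Cm * (Yᴴ * Y) = 1 := by rw [hYY, hCmdef]; exact Matrix.nonsing_inv_mul _ hCdet
  have hCC' : (Yᴴ * Y) * Cm = 1 := by rw [hYY, hCmdef]; exact Matrix.mul_nonsing_inv _ hCdet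
  have hPidem : P * P = P := by
    have e : P * P = Y * (Cm * ((Yᴴ * Y) * (Cm * Yᴴ))) := by
      rw [hPdef]; simp only [Matrix.mul_assoc]
    rw [e, ← Matrix.mul_assoc (Yᴴ * Y) Cm Yᴴ, hCC', Matrix.one_mul, hPdef, hYdef]
    simp only [Matrix.mul_assoc]
  have hPH : Pᴴ = P := by
    rw [hPdef]
    simp only [conjTranspose_mul, conjTranspose_conjTranspose, hCmH, Matrix.mul_assoc]
  have h1P : (1 - P).PosSemidef := by
    have h2 : (1 - P)ᴴ * (1 - P) = 1 - P := by
      rw [conjTranspose_sub, conjTranspose_one, hPH, sub_mul, Matrix.one_mul, mul_sub,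
        Matrix.mul_one, hPidem]
      abel
    rw [← h2]; exact Matrix.posSemidef_conjTranspose_mul_self _
  -- the diagonal weights
  set Q := star V * P * V with hQdef
  have hQps : Q.PosSemidef := by
    have h := hPps.conjTranspose_mul_mul_same V
    rwa [← Matrix.star_eq_conjTranspose] at h
  have hQ0 : ∀ i, 0 ≤ Q i i := psd_diag_nonneg hQps
  have hQ1 : ∀ i, Q i i ≤ 1 := by
    intro i
    have h := h1P.conjTranspose_mul_mul_same V
    rw [← Matrix.star_eq_conjTranspose] at h
    have e : star V * (1 - P) * V = 1 - Q := by
      rw [mul_sub, Matrix.mul_one, sub_mul, hVsV, ← hQdef]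
    rw [e] at h
    have := psd_diag_nonneg h i
    simp only [Matrix.sub_apply, Matrix.one_apply_eq] at this
    linarith
  have htrQ : ∑ i, Q i i = (t : ℝ) := by
    have e1 : Q.trace = P.trace := by
      rw [hQdef, Matrix.mul_assoc, Matrix.trace_mul_comm, Matrix.mul_assoc, hVVs,
        Matrix.mul_one]
    have e2 : P.trace = (t : ℝ) := by
      rw [hPdef, Matrix.trace_mul_comm, ← Matrix.mul_assoc, hCC', Matrix.trace_one,
        Fintype.card_fin]
    have : Q.trace = ∑ i, Q i i := rfl
    rw [← this, e1, e2]
  -- trace identities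
  have htr1 : (Xᴴ * A * X * Cm).trace = (M * P).trace := by
    rw [← hYMY]
    have e : Yᴴ * M * Y * Cm = Yᴴ * (M * Y * Cm) := by simp only [Matrix.mul_assoc]
    rw [e, Matrix.trace_mul_comm, hPdef]
    simp only [Matrix.mul_assoc]
  have htr2 : (M * P).trace = ∑ i, μ i * Q i i := by
    have e : M * P = V * (diagonal μ * (star V * P)) := by
      rw [hspec]; simp only [Matrix.mul_assoc]
    rw [e, Matrix.trace_mul_comm]
    have e2 : diagonal μ * (star V * P) * V = diagonal μ * Q := by
      rw [hQdef]; simp only [Matrix.mul_assoc]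
    rw [e2]
    simp [Matrix.trace, Matrix.diag, Matrix.diagonal_mul]
  -- the numeric inequality
  have hj : d - t < d := by omega
  set j0 : Fin d := ⟨d - t, hj⟩ with hj0def
  set τ := lam j0 with hτdef
  have hfilt : (Finset.univ.filter (fun i : Fin d => d - t ≤ (i : ℕ))) = Finset.Ici j0 := by
    ext i
    simp only [Finset.mem_filter, Finset.mem_univ, true_and, Finset.mem_Ici]
    rw [Fin.le_def]
  have hcard : (Finset.Ici j0).card = t := by
    rw [Fin.card_Ici]; simp only [hj0def, Fin.val_mk]; omega
  -- claim A
  have hA1 : ∑ i ∈ Finset.Ici j0, lam i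
      = τ * t + ∑ i, min (lam i - τ) 0 := by
    have hsplit : ∑ i ∈ Finset.Ici j0, min (lam i - τ) 0
        + ∑ i ∈ (Finset.Ici j0)ᶜ, min (lam i - τ) 0 = ∑ i, min (lam i - τ) 0 :=
      Finset.sum_add_sum_compl _ _
    have h1 : ∑ i ∈ Finset.Ici j0, min (lam i - τ) 0 = ∑ i ∈ Finset.Ici j0, (lam i - τ) := by
      refine Finset.sum_congr rfl fun i hi => ?_
      have : lam i ≤ τ := hlam (Finset.mem_Ici.mp hi)
      exact min_eq_left (by linarith)
    have h2 : ∑ i ∈ (Finset.Ici j0)ᶜ, min (lam i - τ) 0 = 0 := by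
      refine Finset.sum_eq_zero fun i hi => ?_
      have hi' : ¬ j0 ≤ i := by simpa using hi
      have : τ ≤ lam i := hlam (le_of_not_ge hi')
      exact min_eq_right (by linarith)
    have h3 : ∑ i ∈ Finset.Ici j0, (lam i - τ)
        = (∑ i ∈ Finset.Ici j0, lam i) - t * τ := by
      rw [Finset.sum_sub_distrib, Finset.sum_const, hcard, nsmul_eq_mul]
    rw [h1, h2, add_zero, h3] at hsplit
    rw [← hsplit]; ring
  -- transfer of min sums
  have hsum_min : ∑ i, min (lam i - τ) 0 = ∑ i, min (μ i - τ) 0 := by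
    have h := congrArg (fun s : Multiset ℝ => ((s.map fun x => min (x - τ) 0)).sum) hmult
    simpa [Multiset.map_map, Finset.sum_eq_multiset_sum, Function.comp_def] using h
  -- claim B
  have hB1 : τ * t + ∑ i, min (μ i - τ) 0 ≤ ∑ i, μ i * Q i i := by
    have hpt : ∀ i : Fin d, τ * Q i i + min (μ i - τ) 0 ≤ μ i * Q i i := by
      intro i
      rcases le_total (μ i) τ with h | h
      · rw [min_eq_left (by linarith)]
        nlinarith [hQ1 i, hQ0 i]
      · rw [min_eq_right (by linarith)]
        nlinarith [hQ0 i]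
    have hsum := Finset.sum_le_sum (fun i (_ : i ∈ Finset.univ) => hpt i)
    rw [Finset.sum_add_distrib, ← Finset.mul_sum, htrQ] at hsum
    exact hsum
  -- conclude
  rw [hfilt]
  calc ∑ i ∈ Finset.Ici j0, lam i
      = τ * t + ∑ i, min (lam i - τ) 0 := hA1
    _ = τ * t + ∑ i, min (μ i - τ) 0 := by rw [hsum_min]
    _ ≤ ∑ i, μ i * Q i i := hB1
    _ = (M * P).trace := htr2.symm
    _ = (Xᴴ * A * X * Cm).trace := htr1.symm
    _ = (Xᵀ * A * X * (Xᵀ * B * X)⁻¹).trace := by rw [hCmdef, hXt]
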